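/- Let 0 < τ < 1 and let p satisfy |p| < τ, and define f(α) = (1 + αp)/√(1 + 2αp + α²). Then there exists a unique α > 0 with f(α) = τ, and it equals α*(p,τ) = √(1−τ²)·(p√(1−τ²) + τ√(1−p²)) / (τ² − p²). Moreover, for α > 0, f(α) < τ if and only if α > α*(p,τ). -/

import Mathlib

set_option maxHeartbeats 2000000 in
theorem unique_threshold_crossing
    (τ p : ℝ) (hτ : 0 < τ) (hτ1 : τ < 1) (hp : |p| < τ) :
    (∃! α : ℝ, 0 < α ∧
        (1 + α * p) / Real.sqrt (1 + 2 * α * p + α ^ 2) = τ) ∧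
    (0 < Real.sqrt (1 - τ ^ 2) * (p * Real.sqrt (1 - τ ^ 2) + τ * Real.sqrt (1 - p ^ 2)) /
        (τ ^ 2 - p ^ 2) ∧
      (1 + (Real.sqrt (1 - τ ^ 2) * (p * Real.sqrt (1 - τ ^ 2) + τ * Real.sqrt (1 - p ^ 2)) /
          (τ ^ 2 - p ^ 2)) * p) /
        Real.sqrt (1 + 2 * (Real.sqrt (1 - τ ^ 2) * (p * Real.sqrt (1 - τ ^ 2) + τ * Real.sqrt (1 - p ^ 2)) /
          (τ ^ 2 - p ^ 2)) * p +
          (Real.sqrt (1 - τ ^ 2) * (p * Real.sqrt (1 - τ ^ 2) + τ * Real.sqrt (1 - p ^ 2)) /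
          (τ ^ 2 - p ^ 2)) ^ 2) = τ) ∧
    (∀ α : ℝ, 0 < α →
      ((1 + α * p) / Real.sqrt (1 + 2 * α * p + α ^ 2) < τ ↔
        Real.sqrt (1 - τ ^ 2) * (p * Real.sqrt (1 - τ ^ 2) + τ * Real.sqrt (1 - p ^ 2)) /
          (τ ^ 2 - p ^ 2) < α)) := by
  obtain ⟨hp1, hp2⟩ := abs_lt.mp hp
  have hd : 0 < τ ^ 2 - p ^ 2 := by nlinarith
  have hpl : p ^ 2 < 1 := by nlinarith
  set s := Real.sqrt (1 - τ ^ 2) with hs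
  set q := Real.sqrt (1 - p ^ 2) with hq
  have hs2 : s ^ 2 = 1 - τ ^ 2 := Real.sq_sqrt (by nlinarith)
  have hq2 : q ^ 2 = 1 - p ^ 2 := Real.sq_sqrt (by nlinarith)
  have hs0 : 0 < s := Real.sqrt_pos.mpr (by nlinarith)
  have hq0 : 0 < q := Real.sqrt_pos.mpr (by nlinarith)
  clear_value s q
  set A := s * (p * s + τ * q) / (τ ^ 2 - p ^ 2) with hAdef
  have hprod : (τ * q + p * s) * (τ * q - p * s) = τ ^ 2 - p ^ 2 := by
    linear_combination τ ^ 2 * hq2 - p ^ 2 * hs2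
  have hnum : 0 < p * s + τ * q := by
    nlinarith [hprod, mul_pos hτ hq0]
  have hA0 : 0 < A := div_pos (mul_pos hs0 hnum) hd
  have hAd : A * (τ ^ 2 - p ^ 2) = s * (p * s + τ * q) := by
    rw [hAdef]; exact div_mul_cancel₀ _ (ne_of_gt hd)
  clear_value A
  -- key quadratic identity: g(A) = 0
  have key' : (τ ^ 2 - p ^ 2) * ((1 + A * p) ^ 2) =
      (τ ^ 2 - p ^ 2) * (τ ^ 2 * (1 + 2 * A * p + A ^ 2)) := by
    linear_combination (-(A * (τ ^ 2 - p ^ 2)) - s * (p * s + τ * q) + 2 * p * (1 - τ ^ 2)) * hAd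
      + (p ^ 2 * s ^ 2 - 2 * p * (s * (p * s + τ * q)) - (τ ^ 2 - p ^ 2)) * hs2
      + (-(τ ^ 2 * s ^ 2)) * hq2
  have key : (1 + A * p) ^ 2 = τ ^ 2 * (1 + 2 * A * p + A ^ 2) :=
    mul_left_cancel₀ (ne_of_gt hd) key'
  have pos1aux : (τ ^ 2 - p ^ 2) * (1 + A * p) = τ * q * (τ * q + p * s) := by
    linear_combination p * hAd + p ^ 2 * hs2 - τ ^ 2 * hq2
  have pos1 : 0 < 1 + A * p := by
    nlinarith [pos1aux, mul_pos (mul_pos hτ hq0) hnum]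
  have hQ : ∀ α : ℝ, 0 < 1 + 2 * α * p + α ^ 2 := by
    intro α; nlinarith [sq_nonneg (α + p)]
  -- f(A) = τ
  have main_eq : (1 + A * p) / Real.sqrt (1 + 2 * A * p + A ^ 2) = τ := by
    have hsq : Real.sqrt (1 + 2 * A * p + A ^ 2) = (1 + A * p) / τ := by
      rw [show (1 : ℝ) + 2 * A * p + A ^ 2 = ((1 + A * p) / τ) ^ 2 by
        rw [div_pow]
        rw [eq_div_iff (by positivity)]
        linear_combination -key]
      exact Real.sqrt_sq (by positivity)
    rw [hsq, div_div_eq_mul_div, div_eq_iff (by positivity)]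
    ring
  have h1τ : 0 < 1 - τ ^ 2 := by nlinarith
  -- strict inequality for α > A
  have main_lt : ∀ α : ℝ, A < α →
      (1 + α * p) / Real.sqrt (1 + 2 * α * p + α ^ 2) < τ := by
    intro α hαA
    have hα0 : 0 < α := hA0.trans hαA
    have hQα := hQ α
    have hbr : 0 < (α - A) * ((1 - τ ^ 2) + (τ ^ 2 - p ^ 2) * A * α) :=
      mul_pos (by linarith) (by positivity)
    have hg' : A * (τ ^ 2 * (1 + 2 * α * p + α ^ 2) - (1 + α * p) ^ 2) =
        (α - A) * ((1 - τ ^ 2) + (τ ^ 2 - p ^ 2) * A * α) := by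
      linear_combination (-α) * key
    have h3 : 0 < A * (τ ^ 2 * (1 + 2 * α * p + α ^ 2) - (1 + α * p) ^ 2) := by
      rw [hg']; exact hbr
    have hg : (1 + α * p) ^ 2 < τ ^ 2 * (1 + 2 * α * p + α ^ 2) := by
      rcases mul_pos_iff.mp h3 with ⟨_, h⟩ | ⟨h, _⟩
      · linarith
      · linarith
    have hsqp : 0 < Real.sqrt (1 + 2 * α * p + α ^ 2) := Real.sqrt_pos.mpr hQα
    have hsq2 : Real.sqrt (1 + 2 * α * p + α ^ 2) ^ 2 = 1 + 2 * α * p + α ^ 2 :=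
      Real.sq_sqrt hQα.le
    rw [div_lt_iff₀ hsqp]
    have h4 : (1 + α * p) ^ 2 < (τ * Real.sqrt (1 + 2 * α * p + α ^ 2)) ^ 2 := by
      rw [mul_pow, hsq2]; exact hg
    exact lt_of_pow_lt_pow_left₀ 2 (by positivity) h4
  -- strict inequality for 0 < α < A
  have main_gt : ∀ α : ℝ, 0 < α → α < A →
      τ < (1 + α * p) / Real.sqrt (1 + 2 * α * p + α ^ 2) := by
    intro α hα0 hαA
    have hQα := hQ α
    have hbr : 0 < (A - α) * ((1 - τ ^ 2) + (τ ^ 2 - p ^ 2) * A * α) :=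
      mul_pos (by linarith) (by positivity)
    have hg' : A * ((1 + α * p) ^ 2 - τ ^ 2 * (1 + 2 * α * p + α ^ 2)) =
        (A - α) * ((1 - τ ^ 2) + (τ ^ 2 - p ^ 2) * A * α) := by
      linear_combination α * key
    have h3 : 0 < A * ((1 + α * p) ^ 2 - τ ^ 2 * (1 + 2 * α * p + α ^ 2)) := by
      rw [hg']; exact hbr
    have hg : τ ^ 2 * (1 + 2 * α * p + α ^ 2) < (1 + α * p) ^ 2 := by
      rcases mul_pos_iff.mp h3 with ⟨_, h⟩ | ⟨h, _⟩
      · linarith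
      · linarith
    have pos1' : 0 < 1 + α * p := by
      have h5 : 0 < A * (1 + α * p) := by
        have hid : A * (1 + α * p) = (A - α) + α * (1 + A * p) := by ring
        rw [hid]
        have := mul_pos hα0 pos1
        linarith
      rcases mul_pos_iff.mp h5 with ⟨_, h⟩ | ⟨h, _⟩
      · linarith
      · linarith
    have hsqp : 0 < Real.sqrt (1 + 2 * α * p + α ^ 2) := Real.sqrt_pos.mpr hQα
    have hsq2 : Real.sqrt (1 + 2 * α * p + α ^ 2) ^ 2 = 1 + 2 * α * p + α ^ 2 :=
      Real.sq_sqrt hQα.le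
    rw [lt_div_iff₀ hsqp]
    have h4 : (τ * Real.sqrt (1 + 2 * α * p + α ^ 2)) ^ 2 < (1 + α * p) ^ 2 := by
      rw [mul_pow, hsq2]; exact hg
    exact lt_of_pow_lt_pow_left₀ 2 pos1'.le h4
  refine ⟨⟨A, ⟨hA0, main_eq⟩, ?_⟩, ⟨hA0, main_eq⟩, ?_⟩
  · rintro β ⟨hβ0, hβeq⟩
    by_contra hne
    rcases lt_or_gt_of_ne hne with h | h
    · have := main_gt β hβ0 h
      rw [hβeq] at this
      exact lt_irrefl τ this
    · have := main_lt β h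
      rw [hβeq] at this
      exact lt_irrefl τ this
  · intro α hα0
    constructor
    · intro h
      by_contra hle
      rcases lt_or_eq_of_le (le_of_not_gt hle) with h' | h'
      · exact absurd h (not_lt_of_gt (main_gt α hα0 h'))
      · rw [h'] at h
        rw [main_eq] at h
        exact lt_irrefl τ h
    · exact main_lt α
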